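/- Let B be nilpotent in Jordan form with block sizes u₁ ≥ … ≥ u_t, let A be nilpotent commuting with B, and suppose the blocks A_{ij} of A satisfy rank A_{ij} ≤ min{u_i,u_j} − 1 whenever |u_i − u_j| ≤ 1. Then for all i, j and m ≥ 1, rank((A^m)_{ij}) ≤ min{u_i,u_j} − m + h(min{i,j}, max{i,j}), where h(i,j) is the number of jumps of size ≥ 2 in the block sizes between positions i and j (h(i,j) = 0 if u_i − u_j ≤ 1). -/

import Mathlib

/-- The nilpotent Jordan matrix with blocks of sizes `u 1, …, u t`. -/
def jordanMatrix {t : ℕ} (u : Fin t → ℕ) (K : Type*) [Field K] :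
    Matrix (Σ h : Fin t, Fin (u h)) (Σ h : Fin t, Fin (u h)) K :=
  fun x y => if x.1 = y.1 ∧ (y.2 : ℕ) = (x.2 : ℕ) + 1 then 1 else 0

/-- The `(i, j)` block of a matrix written in the block form determined by the
Jordan structure: an `u i × u j` matrix. -/
def matrixBlock {t : ℕ} {u : Fin t → ℕ} {K : Type*} [Field K]
    (A : Matrix (Σ h : Fin t, Fin (u h)) (Σ h : Fin t, Fin (u h)) K)
    (i j : Fin t) : Matrix (Fin (u i)) (Fin (u j)) K :=
  fun a b => A ⟨i, a⟩ ⟨j, b⟩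

set_option linter.unreachableTactic false
set_option linter.unusedTactic false


section Comb

variable {t : ℕ} {u : Fin t → ℕ} {hfun : Fin t → Fin t → ℕ}

/-- A chain as in the characterisation of `hfun`. -/
def IsHChain (u : Fin t → ℕ) (v : ℕ) {L : ℕ} (c : Fin (L + 1) → Fin t) : Prop :=
  StrictMono c ∧
  (∀ l l' : Fin (L + 1), (l : ℕ) + 1 = (l' : ℕ) →
     u (c l') + 2 ≤ u (c l) ∧ ∀ k : Fin t, c l ≤ k → k < c l' → u (c l) ≤ u k + 1) ∧
  v ≤ u (c (Fin.last L)) ∧ u (c (Fin.last L)) ≤ v + 1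

lemma IsHChain.tail' {v L L'} (hLL : L = L' + 1) {c : Fin (L + 1) → Fin t}
    (h : IsHChain u v c) :
    IsHChain u v (fun x : Fin (L' + 1) => c ⟨x.val + 1, by omega⟩) := by
  obtain ⟨h1, h2, h3, h4⟩ := h
  refine ⟨?_, ?_, ?_, ?_⟩
  · intro x y hxy
    exact h1 (show (⟨x.val+1, _⟩ : Fin (L+1)) < ⟨y.val+1, _⟩ from by
      simp only [Fin.mk_lt_mk]; omega)
  · intro l l' hll'
    exact h2 ⟨l.val+1, by omega⟩ ⟨l'.val+1, by omega⟩ (by simp; omega)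
  · convert h3 using 3
    apply Fin.ext; simp [hLL]
  · convert h4 using 3
    apply Fin.ext; simp [hLL]

/-- a chain starting at a point whose value is ≥ v+2 has positive length. -/
lemma IsHChain.pos {v L} {c : Fin (L + 1) → Fin t} (h : IsHChain u v c)
    (hbig : v + 2 ≤ u (c 0)) : 0 < L := by
  rcases Nat.eq_zero_or_pos L with hL | hL
  · subst hL
    exfalso
    have h4 := h.2.2.2
    have e : c (Fin.last 0) = c 0 := congrArg c (by apply Fin.ext; simp)
    rw [e] at h4
    omega
  · exact hL

lemma IsHChain.second {v L} {c : Fin (L + 1) → Fin t} (h : IsHChain u v c)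
    (hL : 0 < L) :
    c 0 < c ⟨1, by omega⟩ ∧ u (c ⟨1, by omega⟩) + 2 ≤ u (c 0) ∧
      ∀ k : Fin t, c 0 ≤ k → k < c ⟨1, by omega⟩ → u (c 0) ≤ u k + 1 := by
  obtain ⟨h1, h2, _, _⟩ := h
  have h0 : ((0 : Fin (L+1)) : ℕ) + 1 = ((⟨1, by omega⟩ : Fin (L+1)) : ℕ) := by simp
  refine ⟨h1 (by simp [Fin.lt_def]), (h2 0 ⟨1, by omega⟩ h0).1, (h2 0 ⟨1, by omega⟩ h0).2⟩

end Comb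

section Main

variable {t : ℕ} {u : Fin t → ℕ} {hfun : Fin t → Fin t → ℕ}
variable (hu : Antitone u) (hupos : ∀ h, 0 < u h)
variable (hfun0 : ∀ i j : Fin t, i ≤ j → u i ≤ u j + 1 → hfun i j = 0)
variable (hfunchain : ∀ i j : Fin t, i ≤ j → u j + 2 ≤ u i →
      ∃ c : Fin (hfun i j + 1) → Fin t, StrictMono c ∧ c 0 = i ∧
        (∀ l l' : Fin (hfun i j + 1), (l : ℕ) + 1 = (l' : ℕ) →
          u (c l') + 2 ≤ u (c l) ∧
          ∀ k : Fin t, c l ≤ k → k < c l' → u (c l) ≤ u k + 1) ∧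
        u j ≤ u (c (Fin.last (hfun i j))) ∧
        u (c (Fin.last (hfun i j))) ≤ u j + 1)

include hu hupos hfun0 hfunchain

/-- Uniqueness: every hfun-style chain for `(p, j)` has length `hfun p j`. -/
lemma hchain_length :
    ∀ N : ℕ, ∀ p j : Fin t, u p ≤ N → p ≤ j →
      ∀ (L : ℕ) (c : Fin (L + 1) → Fin t), IsHChain u (u j) c → c 0 = p →
        L = hfun p j := by
  intro N
  induction N with
  | zero => intro p j hpN; exact absurd (hupos p) (by omega)
  | succ N ih =>
    intro p j hpN hpj L c hc hc0
    by_cases hcase : u p ≤ u j + 1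
    · rcases Nat.eq_zero_or_pos L with hL | hL
      · rw [hL, hfun0 p j hpj hcase]
      · exfalso
        obtain ⟨hlt, hdrop, _⟩ := hc.second hL
        have hle : (⟨1, by omega⟩ : Fin (L+1)) ≤ Fin.last L := by
          simp [Fin.le_def]; omega
        have h1 : u (c (Fin.last L)) ≤ u (c ⟨1, by omega⟩) :=
          hu (hc.1.monotone hle)
        have h2 := hc.2.2.1
        rw [hc0] at hdrop
        omega
    · push_neg at hcase
      have hbig : u j + 2 ≤ u p := hcase
      have hpj' : p < j := by
        rcases lt_or_eq_of_le hpj with h | h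
        · exact h
        · exfalso; rw [h] at hbig; omega
      have hL : 0 < L := hc.pos (by rw [hc0]; omega)
      obtain ⟨hlt, hdrop, hmin⟩ := hc.second hL
      rw [hc0] at hlt hdrop hmin
      set n := c ⟨1, by omega⟩ with hn
      have hnmin : ∀ k : Fin t, p < k → u k + 2 ≤ u p → n ≤ k := by
        intro k hk1 hk2
        by_contra hkn
        push_neg at hkn
        have := hmin k (le_of_lt hk1) hkn
        omega
      -- canonical chain
      obtain ⟨c', hm', hc0', hstep', hl1', hl2'⟩ := hfunchain p j hpj hbig
      have hc' : IsHChain u (u j) c' := ⟨hm', hstep', hl1', hl2'⟩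
      have hH : 0 < hfun p j := hc'.pos (by rw [hc0']; omega)
      obtain ⟨hlt', hdrop', hmin'⟩ := hc'.second hH
      rw [hc0'] at hlt' hdrop' hmin'
      set n' := c' ⟨1, by omega⟩ with hn'
      have hn'min : ∀ k : Fin t, p < k → u k + 2 ≤ u p → n' ≤ k := by
        intro k hk1 hk2
        by_contra hkn
        push_neg at hkn
        have := hmin' k (le_of_lt hk1) hkn
        omega
      have hnn' : n = n' := le_antisymm (hnmin n' hlt' hdrop') (hn'min n hlt hdrop)
      have hnj : n ≤ j := hnmin j hpj' (by omega)
      have hun : u n ≤ N := by omega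
      -- tails
      have htail := hc.tail' (Nat.succ_pred_eq_of_pos hL).symm
      have htail' := hc'.tail' (Nat.succ_pred_eq_of_pos hH).symm
      have e1 : L - 1 = hfun n j := by
        refine ih n j hun hnj _ _ htail ?_
        show c ⟨(0:ℕ)+1, by omega⟩ = n
        rw [hn]
      have e2 : hfun p j - 1 = hfun n j := by
        refine ih n j hun hnj _ _ htail' ?_
        show c' ⟨(0:ℕ)+1, by omega⟩ = n
        rw [hnn', hn']
      omega

/-- The greedy recursion for `hfun`. -/
lemma hfun_rec (p j : Fin t) (hpj : p ≤ j) (hbig : u j + 2 ≤ u p) :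
    ∃ n : Fin t, p < n ∧ n ≤ j ∧ u n + 2 ≤ u p ∧
      (∀ k : Fin t, p < k → u k + 2 ≤ u p → n ≤ k) ∧
      hfun p j = hfun n j + 1 := by
  obtain ⟨c', hm', hc0', hstep', hl1', hl2'⟩ := hfunchain p j hpj hbig
  have hc' : IsHChain u (u j) c' := ⟨hm', hstep', hl1', hl2'⟩
  have hpj' : p < j := by
    rcases lt_or_eq_of_le hpj with h | h
    · exact h
    · exfalso; rw [h] at hbig; omega
  have hH : 0 < hfun p j := hc'.pos (by rw [hc0']; omega)
  obtain ⟨hlt', hdrop', hmin'⟩ := hc'.second hH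
  rw [hc0'] at hlt' hdrop' hmin'
  set n := c' ⟨1, by omega⟩ with hn
  have hnmin : ∀ k : Fin t, p < k → u k + 2 ≤ u p → n ≤ k := by
    intro k hk1 hk2
    by_contra hkn
    push_neg at hkn
    have := hmin' k (le_of_lt hk1) hkn
    omega
  have hnj : n ≤ j := hnmin j hpj' (by omega)
  have htail' := hc'.tail' (Nat.succ_pred_eq_of_pos hH).symm
  have e2 : hfun p j - 1 = hfun n j := by
    refine hchain_length hu hupos hfun0 hfunchain (u n) n j le_rfl hnj _ _ htail' ?_
    show c' ⟨(0:ℕ)+1, by omega⟩ = n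
    rw [hn]
  exact ⟨n, hlt', hnj, hdrop', hnmin, by omega⟩

/-- Start dominance: a start with larger value has larger `hfun`. -/
lemma hfun_mono_start :
    ∀ N : ℕ, ∀ p q j : Fin t, u p ≤ N → p ≤ j → q ≤ j → u q ≤ u p →
      hfun q j ≤ hfun p j := by
  intro N
  induction N with
  | zero => intro p q j hpN; exact absurd (hupos p) (by omega)
  | succ N ih =>
    intro p q j hpN hpj hqj hqp
    by_cases hcase : u q ≤ u j + 1
    · rw [hfun0 q j hqj hcase]; omega
    · push_neg at hcase
      obtain ⟨nq, hq1, hq2, hq3, hq4, hq5⟩ :=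
        hfun_rec hu hupos hfun0 hfunchain q j hqj (by omega)
      obtain ⟨np, hp1, hp2, hp3, hp4, hp5⟩ :=
        hfun_rec hu hupos hfun0 hfunchain p j hpj (by omega)
      have hnqp : p < nq := by
        by_contra hco
        push_neg at hco
        have := hu hco
        omega
      have hnpq : np ≤ nq := hp4 nq hnqp (by omega)
      have hv : u nq ≤ u np := hu hnpq
      have := ih np nq j (by omega) hp2 hq2 hv
      omega

/-- Value drop bound. -/
lemma hfun_drop :
    ∀ N : ℕ, ∀ p j : Fin t, u p ≤ N → p ≤ j → 2 * hfun p j + u j ≤ u p := by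
  intro N
  induction N with
  | zero => intro p j hpN; exact absurd (hupos p) (by omega)
  | succ N ih =>
    intro p j hpN hpj
    by_cases hcase : u p ≤ u j + 1
    · rw [hfun0 p j hpj hcase]
      have := hu hpj
      omega
    · push_neg at hcase
      obtain ⟨n, h1, h2, h3, h4, h5⟩ :=
        hfun_rec hu hupos hfun0 hfunchain p j hpj (by omega)
      have := ih n j (by omega) h2
      omega

lemma hfun_caseA :
    ∀ N : ℕ, ∀ i k j : Fin t, u i ≤ N → i ≤ k → k ≤ j →
      hfun i k + hfun k j ≤ hfun i j := by
  intro N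
  induction N with
  | zero => intro i k j hiN; exact absurd (hupos i) (by omega)
  | succ N ih =>
    intro i k j hiN hik hkj
    by_cases hcase : u i ≤ u k + 1
    · rw [hfun0 i k hik hcase]
      have := hfun_mono_start hu hupos hfun0 hfunchain (u i) i k j le_rfl
        (le_trans hik hkj) hkj (hu hik)
      omega
    · push_neg at hcase
      obtain ⟨n, h1, h2, h3, h4, h5⟩ :=
        hfun_rec hu hupos hfun0 hfunchain i k hik (by omega)
      have hukj : u j ≤ u k := hu hkj
      obtain ⟨n', h1', h2', h3', h4', h5'⟩ :=
        hfun_rec hu hupos hfun0 hfunchain i j (le_trans hik hkj) (by omega)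
      have hnn : n = n' := le_antisymm (h4 n' h1' h3') (h4' n h1 h3)
      rw [← hnn] at h5'
      have := ih n k j (by omega) h2 hkj
      omega

lemma hfun_caseB :
    ∀ N : ℕ, ∀ i j k : Fin t, u i ≤ N → i ≤ j → j ≤ k →
      hfun i k + hfun j k + u k ≤ hfun i j + u j := by
  intro N
  induction N with
  | zero => intro i j k hiN; exact absurd (hupos i) (by omega)
  | succ N ih =>
    intro i j k hiN hij hjk
    have hik := le_trans hij hjk
    by_cases hcase : u i ≤ u j + 1
    · have e1 := hfun_drop hu hupos hfun0 hfunchain (u i) i k le_rfl hik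
      have e2 := hfun_drop hu hupos hfun0 hfunchain (u j) j k le_rfl hjk
      have e0 := hfun0 i j hij hcase
      have := hu hij
      omega
    · push_neg at hcase
      have hujk : u k ≤ u j := hu hjk
      obtain ⟨n, h1, h2, h3, h4, h5⟩ :=
        hfun_rec hu hupos hfun0 hfunchain i j hij (by omega)
      obtain ⟨n', h1', h2', h3', h4', h5'⟩ :=
        hfun_rec hu hupos hfun0 hfunchain i k hik (by omega)
      have hnn : n = n' := le_antisymm (h4 n' h1' h3') (h4' n h1 h3)
      rw [← hnn] at h5'
      have := ih n j k (by omega) h2 hjk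
      omega

lemma hfun_caseC :
    ∀ N : ℕ, ∀ k i j : Fin t, u k ≤ N → k ≤ i → i ≤ j →
      hfun k i + hfun k j + u i ≤ hfun i j + u k := by
  intro N
  induction N with
  | zero => intro k i j hkN; exact absurd (hupos k) (by omega)
  | succ N ih =>
    intro k i j hkN hki hij
    have hkj := le_trans hki hij
    have huki : u i ≤ u k := hu hki
    have huij : u j ≤ u i := hu hij
    by_cases hcase : u k ≤ u i + 1
    · have e0 := hfun0 k i hki hcase
      by_cases hcase2 : u k ≤ u j + 1
      · rw [hfun0 k j hkj hcase2, e0]; omega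
      · push_neg at hcase2
        obtain ⟨n, h1, h2, h3, h4, h5⟩ :=
          hfun_rec hu hupos hfun0 hfunchain k j hkj (by omega)
        by_cases hcase3 : u k ≤ u i
        · have := hfun_mono_start hu hupos hfun0 hfunchain (u i) i k j le_rfl hij hkj hcase3
          omega
        · have hn : u n ≤ u i := by omega
          have := hfun_mono_start hu hupos hfun0 hfunchain (u i) i n j le_rfl hij h2 hn
          omega
    · push_neg at hcase
      obtain ⟨n, h1, h2, h3, h4, h5⟩ :=
        hfun_rec hu hupos hfun0 hfunchain k i hki (by omega)
      obtain ⟨n', h1', h2', h3', h4', h5'⟩ :=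
        hfun_rec hu hupos hfun0 hfunchain k j hkj (by omega)
      have hnn : n = n' := le_antisymm (h4 n' h1' h3') (h4' n h1 h3)
      rw [← hnn] at h5'
      have := ih n i j (by omega) h2 hij
      omega

/-- The master combinatorial inequality. -/
lemma hfun_star (i j k : Fin t) :
    hfun (min i k) (max i k) + hfun (min k j) (max k j) + (u j - u i)
      ≤ hfun (min i j) (max i j) + (u k - u i) + (u j - u k) := by
  have key : ∀ a b : Fin t, a ≤ b →
      hfun (min a b) (max a b) = hfun a b ∧ hfun (min b a) (max b a) = hfun a b := by
    intro a b hab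
    rw [min_eq_left hab, max_eq_right hab, min_eq_right hab, max_eq_left hab]
    exact ⟨rfl, rfl⟩
  rcases le_total i j with hij | hij
  · rcases le_total k i with hki | hik
    · -- k ≤ i ≤ j : case C
      have hC := hfun_caseC hu hupos hfun0 hfunchain (u k) k i j le_rfl hki hij
      have e1 := (key k i hki).2
      have e2 := (key k j (le_trans hki hij)).1
      have e3 := (key i j hij).1
      have f1 := hu hki
      have f2 := hu hij
      rw [e1, e2, e3]
      omega
    · rcases le_total k j with hkj | hjk
      · -- i ≤ k ≤ j : case A
        have hA := hfun_caseA hu hupos hfun0 hfunchain (u i) i k j le_rfl hik hkj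
        have e1 := (key i k hik).1
        have e2 := (key k j hkj).1
        have e3 := (key i j hij).1
        have f1 := hu hik
        have f2 := hu hkj
        rw [e1, e2, e3]
        omega
      · -- i ≤ j ≤ k : case B
        have hB := hfun_caseB hu hupos hfun0 hfunchain (u i) i j k le_rfl hij hjk
        have e1 := (key i k (le_trans hij hjk)).1
        have e2 := (key j k hjk).2
        have e3 := (key i j hij).1
        have f1 := hu hij
        have f2 := hu hjk
        rw [e1, e2, e3]
        omega
  · rcases le_total k j with hkj | hjk
    · -- k ≤ j ≤ i : case C with roles j i
      have hC := hfun_caseC hu hupos hfun0 hfunchain (u k) k j i le_rfl hkj hij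
      have e1 := (key k i (le_trans hkj hij)).2
      have e2 := (key k j hkj).1
      have e3 := (key j i hij).2
      have f1 := hu hkj
      have f2 := hu hij
      rw [e1, e2, e3]
      omega
    · rcases le_total k i with hki | hik
      · -- j ≤ k ≤ i : case A with roles j k i
        have hA := hfun_caseA hu hupos hfun0 hfunchain (u j) j k i le_rfl hjk hki
        have e1 := (key k i hki).2
        have e2 := (key j k hjk).2
        have e3 := (key j i hij).2
        have f1 := hu hjk
        have f2 := hu hki
        rw [e1, e2, e3]
        omega
      · -- j ≤ i ≤ k : case B with roles j i k
        have hB := hfun_caseB hu hupos hfun0 hfunchain (u j) j i k le_rfl hij hik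
        have e1 := (key i k hik).1
        have e2 := (key j k (le_trans hij hik)).2
        have e3 := (key j i hij).2
        have f1 := hu hij
        have f2 := hu hik
        rw [e1, e2, e3]
        omega

/-- `hfun` is positive on big jumps (ordered version). -/
lemma hfun_pos' (p j : Fin t) (hpj : p ≤ j) (hbig : u j + 2 ≤ u p) :
    1 ≤ hfun p j := by
  obtain ⟨n, _, _, _, _, h5⟩ := hfun_rec hu hupos hfun0 hfunchain p j hpj hbig
  omega

end Main
section Mat

variable {K : Type*} [Field K] {t : ℕ} {u : Fin t → ℕ}

lemma mul_jordan_apply (M : Matrix (Σ h : Fin t, Fin (u h)) (Σ h : Fin t, Fin (u h)) K)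
    (x y : Σ h : Fin t, Fin (u h)) :
    (M * jordanMatrix u K) x y =
      if h : 0 < (y.2 : ℕ) then M x ⟨y.1, ⟨(y.2 : ℕ) - 1, by omega⟩⟩ else 0 := by
  classical
  rw [Matrix.mul_apply]
  split_ifs with h
  · rw [Finset.sum_eq_single (⟨y.1, ⟨(y.2 : ℕ) - 1, by omega⟩⟩ : Σ h : Fin t, Fin (u h))]
    · rw [jordanMatrix]
      have hc : (⟨y.1, ⟨(y.2:ℕ)-1, by omega⟩⟩ : Σ h : Fin t, Fin (u h)).1 = y.1 ∧
          (y.2 : ℕ) = ((⟨y.1, ⟨(y.2:ℕ)-1, by omega⟩⟩ : Σ h : Fin t, Fin (u h)).2 : ℕ) + 1 :=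
        ⟨rfl, by simp; omega⟩
      rw [if_pos hc, mul_one]
    · rintro ⟨z1, z2⟩ _ hz
      rw [jordanMatrix]
      simp only
      rw [if_neg, mul_zero]
      rintro ⟨rfl, h2⟩
      apply hz
      congr 1
      apply Fin.ext
      simp only
      omega
    · intro hmem
      exact absurd (Finset.mem_univ _) hmem
  · apply Finset.sum_eq_zero
    rintro ⟨z1, z2⟩ _
    rw [jordanMatrix]
    simp only
    rw [if_neg, mul_zero]
    rintro ⟨rfl, h2⟩
    omega

lemma jordan_mul_apply (M : Matrix (Σ h : Fin t, Fin (u h)) (Σ h : Fin t, Fin (u h)) K)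
    (x y : Σ h : Fin t, Fin (u h)) :
    (jordanMatrix u K * M) x y =
      if h : (x.2 : ℕ) + 1 < u x.1 then M ⟨x.1, ⟨(x.2 : ℕ) + 1, h⟩⟩ y else 0 := by
  classical
  rw [Matrix.mul_apply]
  split_ifs with h
  · rw [Finset.sum_eq_single (⟨x.1, ⟨(x.2 : ℕ) + 1, h⟩⟩ : Σ h : Fin t, Fin (u h))]
    · rw [jordanMatrix]
      have hc : x.1 = (⟨x.1, ⟨(x.2:ℕ)+1, h⟩⟩ : Σ h : Fin t, Fin (u h)).1 ∧
          (((⟨x.1, ⟨(x.2:ℕ)+1, h⟩⟩ : Σ h : Fin t, Fin (u h)).2 : ℕ)) = (x.2 : ℕ) + 1 :=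
        ⟨rfl, by simp⟩
      rw [if_pos hc, one_mul]
    · rintro ⟨z1, z2⟩ _ hz
      rw [jordanMatrix]
      simp only
      rw [if_neg, zero_mul]
      rintro ⟨rfl, h2⟩
      apply hz
      congr 1
      apply Fin.ext
      simp only
      omega
    · intro hmem
      exact absurd (Finset.mem_univ _) hmem
  · apply Finset.sum_eq_zero
    rintro ⟨z1, z2⟩ _
    rw [jordanMatrix]
    simp only
    rw [if_neg, zero_mul]
    rintro ⟨h1, h2⟩
    subst h1
    omega

section Cent

variable (hupos : ∀ h, 0 < u h)
variable {M : Matrix (Σ h : Fin t, Fin (u h)) (Σ h : Fin t, Fin (u h)) K}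
variable (hM : M * jordanMatrix u K = jordanMatrix u K * M)

include hM

lemma cent_shift (h k : Fin t) (a b : ℕ) (ha : a + 1 < u h) (hb : b + 1 < u k) :
    M ⟨h, ⟨a, by omega⟩⟩ ⟨k, ⟨b, by omega⟩⟩ = M ⟨h, ⟨a + 1, ha⟩⟩ ⟨k, ⟨b + 1, hb⟩⟩ := by
  have e := congrFun (congrFun hM ⟨h, ⟨a, by omega⟩⟩) ⟨k, ⟨b + 1, hb⟩⟩
  rw [mul_jordan_apply, jordan_mul_apply] at e
  rw [dif_pos (by simp : 0 < ((⟨k, ⟨b+1, hb⟩⟩ : Σ h : Fin t, Fin (u h)).2 : ℕ))] at e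
  rw [dif_pos (by simpa using ha)] at e
  convert e using 3 <;> simp

lemma cent_lastrow (h k : Fin t) (a b : ℕ) (ha : a + 1 = u h) (hb : b + 1 < u k) :
    M ⟨h, ⟨a, by omega⟩⟩ ⟨k, ⟨b, by omega⟩⟩ = 0 := by
  have e := congrFun (congrFun hM ⟨h, ⟨a, by omega⟩⟩) ⟨k, ⟨b + 1, hb⟩⟩
  rw [mul_jordan_apply, jordan_mul_apply] at e
  rw [dif_pos (by simp : 0 < ((⟨k, ⟨b+1, hb⟩⟩ : Σ h : Fin t, Fin (u h)).2 : ℕ))] at e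
  rw [dif_neg (by simp; omega)] at e
  convert e using 3 <;> simp

lemma cent_firstcol (h k : Fin t) (a : ℕ) (ha : 0 < a) (ha2 : a < u h) (hk : 0 < u k) :
    M ⟨h, ⟨a, ha2⟩⟩ ⟨k, ⟨0, hk⟩⟩ = 0 := by
  have e := congrFun (congrFun hM ⟨h, ⟨a - 1, by omega⟩⟩) ⟨k, ⟨0, hk⟩⟩
  rw [mul_jordan_apply, jordan_mul_apply] at e
  rw [dif_neg (by simp)] at e
  rw [dif_pos (by simp; omega)] at e
  have e' : M ⟨h, ⟨a - 1 + 1, by omega⟩⟩ ⟨k, ⟨0, hk⟩⟩ = 0 := e.symm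
  have f : (⟨a - 1 + 1, by omega⟩ : Fin (u h)) = ⟨a, ha2⟩ := by
    apply Fin.ext; simp; omega
  rw [f] at e'
  exact e'

lemma cent_lower (h k : Fin t) :
    ∀ (b a : ℕ) (ha : a < u h) (hb : b < u k), b < a →
      M ⟨h, ⟨a, ha⟩⟩ ⟨k, ⟨b, hb⟩⟩ = 0 := by
  intro b
  induction b with
  | zero =>
    intro a ha hb hba
    exact cent_firstcol hM h k a hba ha hb
  | succ b ih =>
    intro a ha hb hba
    have e := cent_shift hM h k (a - 1) b (by omega) hb
    have e2 := ih (a - 1) (by omega) (by omega) (by omega)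
    have f1 : (⟨a - 1, by omega⟩ : Fin (u h)) = ⟨a - 1, by omega⟩ := rfl
    rw [e2] at e
    convert e.symm using 3
    apply Fin.ext
    simp
    omega

lemma cent_band (h k : Fin t) :
    ∀ (n a b : ℕ) (ha : a < u h) (hb : b < u k), u h - a ≤ n →
      b + u h < a + u k → M ⟨h, ⟨a, ha⟩⟩ ⟨k, ⟨b, hb⟩⟩ = 0 := by
  intro n
  induction n with
  | zero => intro a b ha hb h1 h2; omega
  | succ n ih =>
    intro a b ha hb h1 h2
    by_cases hlast : a + 1 = u h
    · exact cent_lastrow hM h k a b hlast (by omega)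
    · have e := cent_shift hM h k a b (by omega) (by omega)
      rw [e]
      exact ih (a + 1) (b + 1) (by omega) (by omega) (by omega) (by omega)

lemma cent_diag (h k : Fin t) :
    ∀ (d a b : ℕ) (ha : a + d < u h) (hb : b + d < u k),
      M ⟨h, ⟨a, by omega⟩⟩ ⟨k, ⟨b, by omega⟩⟩ = M ⟨h, ⟨a + d, ha⟩⟩ ⟨k, ⟨b + d, hb⟩⟩ := by
  intro d
  induction d with
  | zero => intro a b ha hb; rfl
  | succ d ih =>
    intro a b ha hb
    have e1 := ih a b (by omega) (by omega)
    have e2 := cent_shift hM h k (a + d) (b + d) (by omega) (by omega)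
    rw [e1, e2]
    congr 1 <;> (apply Fin.ext; simp; omega)

end Cent

end Mat

section Rank

variable {K : Type*} [Field K]

/-- If all columns with index `< r` vanish, the rank is at most `n - r`. -/
lemma rank_le_nonzero_cols {m n : ℕ} (M : Matrix (Fin m) (Fin n) K) (r : ℕ)
    (h : ∀ (a : Fin m) (b : Fin n), (b : ℕ) < r → M a b = 0) :
    M.rank ≤ n - r := by
  classical
  by_cases hrn : n ≤ r
  · have : M = 0 := by
      ext a b
      exact h a b (by omega)
    rw [this]
    simp
  · push_neg at hrn
    rw [Matrix.rank_eq_finrank_span_cols, Matrix.col]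
    set s : Finset (Fin n) := Finset.univ.filter (fun b : Fin n => r ≤ (b : ℕ)) with hs
    set T : Finset (Fin m → K) := s.image (fun b => M.transpose b) with hT
    have hsub : Set.range M.transpose ⊆ insert 0 (T : Set (Fin m → K)) := by
      rintro v ⟨b, rfl⟩
      by_cases hb : r ≤ (b : ℕ)
      · right
        exact Finset.mem_coe.mpr (Finset.mem_image.mpr ⟨b, by simp [hs, hb], rfl⟩)
      · left
        funext a
        exact h a b (by omega)
    have h1 : Submodule.span K (Set.range M.transpose) ≤ Submodule.span K (T : Set (Fin m → K)) := by
      rw [← Submodule.span_insert_zero (s := (T : Set (Fin m → K)))]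
      exact Submodule.span_mono hsub
    have h2 : Module.finrank K (Submodule.span K (Set.range M.transpose)) ≤
        Module.finrank K (Submodule.span K (T : Set (Fin m → K))) :=
      Submodule.finrank_mono h1
    have h3 : Module.finrank K (Submodule.span K (T : Set (Fin m → K))) ≤ T.card :=
      finrank_span_finset_le_card T
    have h4 : T.card ≤ s.card := Finset.card_image_le
    have h5 : s.card ≤ n - r := by
      have hcard : (Finset.univ.filter (fun b : Fin n => r ≤ (b : ℕ))).card + r = n := by
        have hcompl : (Finset.univ.filter (fun b : Fin n => ¬ r ≤ (b : ℕ))).card = r := by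
          have : Finset.univ.filter (fun b : Fin n => ¬ r ≤ (b : ℕ)) =
              (Finset.range r).attachFin (by intro m hm; rw [Finset.mem_range] at hm; omega) := by
            ext b
            simp [Finset.mem_attachFin]
          rw [this, Finset.card_attachFin, Finset.card_range]
        have hsum := Finset.card_filter_add_card_filter_not
          (s := (Finset.univ : Finset (Fin n))) (p := fun b : Fin n => r ≤ (b : ℕ))
        simp only [Finset.card_univ, Fintype.card_fin] at hsum
        omega
      rw [hs]
      omega
    omega

/-- A triangular `p × p` sub-family with nonzero constant diagonal gives rank ≥ p. -/
lemma rank_ge_of_triangular {m n p : ℕ} (B : Matrix (Fin m) (Fin n) K)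
    (f : Fin p → Fin m) (g : Fin p → Fin n) (γ : K) (hγ : γ ≠ 0)
    (hdiag : ∀ a : Fin p, B (f a) (g a) = γ)
    (hlow : ∀ a b : Fin p, (b : ℕ) < (a : ℕ) → B (f a) (g b) = 0) :
    p ≤ B.rank := by
  classical
  set S : Matrix (Fin p) (Fin p) K := Matrix.of fun a b => B (f a) (g b) with hS
  have hdet : S.det = γ ^ p := by
    have htri : S.BlockTriangular id := by
      intro a b hab
      exact hlow a b hab
    rw [Matrix.det_of_upperTriangular htri]
    simp only [hS, Matrix.of_apply]
    rw [Finset.prod_congr rfl (fun a _ => hdiag a)]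
    simp
  have hunit : IsUnit S := by
    rw [Matrix.isUnit_iff_isUnit_det, hdet]
    exact (pow_ne_zero p hγ).isUnit
  have hrankS : S.rank = p := by
    rw [Matrix.rank_of_isUnit S hunit, Fintype.card_fin]
  -- express S as a product
  have hfact : S = ((1 : Matrix (Fin m) (Fin m) K).submatrix f (Equiv.refl (Fin m))) *
      (B * ((1 : Matrix (Fin n) (Fin n) K).submatrix (Equiv.refl (Fin n)) g)) := by
    rw [Matrix.mul_submatrix_one, Matrix.one_submatrix_mul]
    ext a b
    simp [hS, Matrix.submatrix_apply]
  calc p = S.rank := hrankS.symm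
    _ ≤ (B * ((1 : Matrix (Fin n) (Fin n) K).submatrix (Equiv.refl (Fin n)) g)).rank := by
        rw [hfact]; exact Matrix.rank_mul_le_right _ _
    _ ≤ B.rank := Matrix.rank_mul_le_left _ _

end Rank

/-- Let `B` be nilpotent in Jordan form with block sizes `u 1 ≥ … ≥ u t > 0`,
let `A` be nilpotent commuting with `B`, and suppose
`rank A_{ij} ≤ min (u i) (u j) − 1` whenever `|u i − u j| ≤ 1`.
Let `hfun i j` (for `i ≤ j`) be the number of jumps of size `≥ 2` in the block
sizes between positions `i` and `j`: it is `0` if `u i − u j ≤ 1`, and otherwise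
it is characterised by the existence of a chain `i = k₀ < k₁ < … < k_{hfun i j}`
where each step drops by at least `2`, block sizes strictly between consecutive
chain points differ from the size at the previous chain point by at most `1`,
and `0 ≤ u (k_last) − u j ≤ 1`.  Then for all `i`, `j` and all `m ≥ 1`,
`rank ((A^m)_{ij}) ≤ max (min (u i) (u j) − m + hfun (min i j) (max i j)) 0`
(as integers, the `max` with `0` encoding the convention that a non-positive
bound means the rank is `0`). -/
theorem rank_block_pow_le (K : Type*) [Field K]
    (t : ℕ) (u : Fin t → ℕ) (hu : Antitone u) (hupos : ∀ h, 0 < u h)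
    (A : Matrix (Σ h : Fin t, Fin (u h)) (Σ h : Fin t, Fin (u h)) K)
    (hA : IsNilpotent A)
    (hcomm : A * jordanMatrix u K = jordanMatrix u K * A)
    (hblocks : ∀ i j : Fin t, u i ≤ u j + 1 → u j ≤ u i + 1 →
      (matrixBlock A i j).rank ≤ min (u i) (u j) - 1)
    (hfun : Fin t → Fin t → ℕ)
    (hfun0 : ∀ i j : Fin t, i ≤ j → u i ≤ u j + 1 → hfun i j = 0)
    (hfunchain : ∀ i j : Fin t, i ≤ j → u j + 2 ≤ u i →
      ∃ c : Fin (hfun i j + 1) → Fin t, StrictMono c ∧ c 0 = i ∧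
        (∀ l l' : Fin (hfun i j + 1), (l : ℕ) + 1 = (l' : ℕ) →
          u (c l') + 2 ≤ u (c l) ∧
          ∀ k : Fin t, c l ≤ k → k < c l' → u (c l) ≤ u k + 1) ∧
        u j ≤ u (c (Fin.last (hfun i j))) ∧
        u (c (Fin.last (hfun i j))) ≤ u j + 1) :
    ∀ i j : Fin t, ∀ m : ℕ, 1 ≤ m →
      ((matrixBlock (A ^ m) i j).rank : ℤ) ≤
        max ((min (u i) (u j) : ℤ) - m + hfun (min i j) (max i j)) 0 := by
  classical
  -- Step 1: the one-step vanishing statement.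
  have key1 : ∀ (i j : Fin t) (a : Fin (u i)) (b : Fin (u j)),
      (((b : ℕ) : ℤ) - ((a : ℕ) : ℤ) <
        ((u j - u i : ℕ) : ℤ) + 1 - (hfun (min i j) (max i j) : ℤ)) →
      A ⟨i, a⟩ ⟨j, b⟩ = 0 := by
    intro i j a b hlt
    by_cases h1 : (b : ℕ) < (a : ℕ)
    · exact cent_lower hcomm i j (b : ℕ) (a : ℕ) a.isLt b.isLt h1
    · by_cases h2 : (b : ℕ) + u i < (a : ℕ) + u j
      · exact cent_band hcomm i j (u i) (a : ℕ) (b : ℕ) a.isLt b.isLt (by omega) h2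
      · -- on the critical diagonal
        push_neg at h1 h2
        have hHs : hfun (min i j) (max i j) = 0 ∧ (b : ℕ) = (a : ℕ) + (u j - u i) := by
          constructor <;> omega
        -- block sizes differ by at most 1
        have hsz : u i ≤ u j + 1 ∧ u j ≤ u i + 1 := by
          by_contra hco
          have hminmax : u (max i j) + 2 ≤ u (min i j) := by
            have e1 : u (max i j) ≤ u (min i j) := hu (min_le_max)
            rcases le_total i j with hij | hij
            · rw [min_eq_left hij, max_eq_right hij] at *
              omega
            · rw [min_eq_right hij, max_eq_left hij] at *
              omega
          have := hfun_pos' hu hupos hfun0 hfunchain (min i j) (max i j)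
            min_le_max hminmax
          omega
        by_contra hne
        set c₀ := u j - u i with hc₀
        have hbe : (b : ℕ) = (a : ℕ) + c₀ := hHs.2
        have hc₀j : c₀ < u j := by have := hupos i; have := hupos j; omega
        have hγdiag := cent_diag hcomm i j (a : ℕ) 0 c₀ (by simpa using a.isLt)
          (by omega)
        have hbb : (⟨c₀ + (a : ℕ), by omega⟩ : Fin (u j)) = b := by
          apply Fin.ext; simp; omega
        have haa : (⟨0 + (a : ℕ), by simpa using a.isLt⟩ : Fin (u i)) = a := by
          apply Fin.ext; simp
        rw [haa, hbb] at hγdiag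
        have hγ : A ⟨i, ⟨0, hupos i⟩⟩ ⟨j, ⟨c₀, hc₀j⟩⟩ ≠ 0 := by
          rw [hγdiag]; exact hne
        -- rank lower bound
        set p := min (u i) (u j) with hp
        have hcp : c₀ + p ≤ u j := by omega
        have hrge : p ≤ (matrixBlock A i j).rank := by
          apply rank_ge_of_triangular (matrixBlock A i j)
            (fun x : Fin p => ⟨(x : ℕ), by omega⟩)
            (fun x : Fin p => ⟨c₀ + (x : ℕ), by omega⟩)
            (A ⟨i, ⟨0, hupos i⟩⟩ ⟨j, ⟨c₀, hc₀j⟩⟩) hγ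
          · intro x
            have hd := cent_diag hcomm i j (x : ℕ) 0 c₀ (by omega) (by omega)
            have e0 : (⟨0 + (x : ℕ), by omega⟩ : Fin (u i)) = ⟨(x : ℕ), by omega⟩ := by
              apply Fin.ext; simp
            rw [e0] at hd
            exact hd.symm
          · intro x y hxy
            by_cases hcase : c₀ + (y : ℕ) < (x : ℕ)
            · exact cent_lower hcomm i j (c₀ + (y : ℕ)) (x : ℕ) (by omega) (by omega)
                hcase
            · exact cent_band hcomm i j (u i) (x : ℕ) (c₀ + (y : ℕ)) (by omega)
                (by omega) (by omega) (by omega)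
        have hrle := hblocks i j hsz.1 hsz.2
        have hp1 : 1 ≤ p := by have := hupos i; have := hupos j; omega
        omega
    -- end key1
  have key : ∀ m : ℕ, 1 ≤ m → ∀ (i j : Fin t) (a : Fin (u i)) (b : Fin (u j)),
      (((b : ℕ) : ℤ) - ((a : ℕ) : ℤ) <
        ((u j - u i : ℕ) : ℤ) + m - (hfun (min i j) (max i j) : ℤ)) →
      (A ^ m) ⟨i, a⟩ ⟨j, b⟩ = 0 := by
    intro m hm
    induction m, hm using Nat.le_induction with
    | base =>
      intro i j a b hlt
      rw [pow_one]
      exact key1 i j a b (by push_cast at hlt ⊢; omega)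
    | succ m hm ih =>
      intro i j a b hlt
      rw [pow_succ, Matrix.mul_apply]
      apply Finset.sum_eq_zero
      rintro ⟨k, c⟩ -
      by_cases h1 : ((c : ℕ) : ℤ) - ((a : ℕ) : ℤ) <
          ((u k - u i : ℕ) : ℤ) + m - (hfun (min i k) (max i k) : ℤ)
      · rw [ih i k a c h1, zero_mul]
      · by_cases h2 : ((b : ℕ) : ℤ) - ((c : ℕ) : ℤ) <
            ((u j - u k : ℕ) : ℤ) + 1 - (hfun (min k j) (max k j) : ℤ)
        · rw [key1 k j c b h2, mul_zero]
        · exfalso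
          have hstar := hfun_star hu hupos hfun0 hfunchain i j k
          push_neg at h1 h2
          omega
  -- Step 3: conclude the rank bound.
  intro i j m hm
  set R : ℤ := ((u j - u i : ℕ) : ℤ) + m - (hfun (min i j) (max i j) : ℤ) with hR
  have hcols : ∀ (a : Fin (u i)) (b : Fin (u j)), (b : ℕ) < R.toNat →
      matrixBlock (A ^ m) i j a b = 0 := by
    intro a b hb
    exact key m hm i j a b (by omega)
  have hrank := rank_le_nonzero_cols (matrixBlock (A ^ m) i j) R.toNat hcols
  omega
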